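/- For a probability measure μ on [0, C²] with moments m_n = ∫ x^n dμ, the sequence of lower bounds b_n (defined via truncation of the continued fraction expansion) is nondecreasing and satisfies b_n^n ≥ m_n/m_0, hence b_n converges to the exponential growth rate of (m_n). -/

import Mathlib

open MeasureTheory Filter PowerSeries

/-- The denominator chain of the finite continued fraction. -/
noncomputable def cfD : List ℝ → PowerSeries ℝ
  | [] => 1
  | a :: l => 1 - PowerSeries.C a * PowerSeries.X * (cfD l)⁻¹

/-- `cfA [a₀,…,aₙ] = a₀ / (1 - a₁ t / (⋯ (1 - aₙ t)))`. -/
noncomputable def cfA : List ℝ → PowerSeries ℝ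
  | [] => 0
  | a :: l => PowerSeries.C a * (cfD l)⁻¹

lemma cfD_cc (l : List ℝ) : PowerSeries.constantCoeff (cfD l) = 1 := by
  cases l with
  | nil => simp [cfD]
  | cons a l => simp [cfD]

lemma cfF_zero (l : List ℝ) : PowerSeries.coeff 0 (cfD l)⁻¹ = 1 := by
  rw [PowerSeries.coeff_zero_eq_constantCoeff, PowerSeries.constantCoeff_inv, cfD_cc, inv_one]

lemma cfF_eq (a : ℝ) (l : List ℝ) :
    (cfD (a :: l))⁻¹ = 1 + PowerSeries.C a * (PowerSeries.X * ((cfD l)⁻¹ * (cfD (a :: l))⁻¹)) := by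
  have h := PowerSeries.mul_inv_cancel (cfD (a :: l)) (by rw [cfD_cc]; norm_num)
  nth_rewrite 1 [show cfD (a :: l) = 1 - PowerSeries.C a * PowerSeries.X * (cfD l)⁻¹ from rfl] at h
  linear_combination h

lemma cfF_succ (a : ℝ) (l : List ℝ) (k : ℕ) :
    PowerSeries.coeff (k+1) (cfD (a :: l))⁻¹ =
      a * ∑ p ∈ Finset.range (k+1),
        PowerSeries.coeff p (cfD l)⁻¹ * PowerSeries.coeff (k - p) (cfD (a :: l))⁻¹ := by
  conv_lhs => rw [cfF_eq a l]
  rw [map_add, PowerSeries.coeff_one, PowerSeries.coeff_C_mul, PowerSeries.coeff_succ_X_mul,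
    PowerSeries.coeff_mul, Finset.Nat.sum_antidiagonal_eq_sum_range_succ_mk]
  simp

lemma cfF_nonneg : ∀ (l : List ℝ), (∀ x ∈ l, 0 ≤ x) → ∀ k, 0 ≤ PowerSeries.coeff k (cfD l)⁻¹ := by
  intro l
  induction l with
  | nil =>
    intro _ k
    cases k with
    | zero => rw [cfF_zero]; norm_num
    | succ k => simp [cfD, PowerSeries.coeff_one]
  | cons a l ih =>
    intro h k
    induction k using Nat.strong_induction_on with
    | _ k ihk =>
      match k with
      | 0 => rw [cfF_zero]; norm_num
      | (k+1) =>
        rw [cfF_succ]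
        refine mul_nonneg (h a (by simp)) (Finset.sum_nonneg fun p hp => ?_)
        exact mul_nonneg (ih (fun x hx => h x (by simp [hx])) p) (ihk (k - p) (by omega))

lemma cfF_append : ∀ (l : List ℝ), (∀ x ∈ l, 0 ≤ x) → ∀ (a : ℝ), 0 ≤ a → ∀ k,
    PowerSeries.coeff k (cfD l)⁻¹ ≤ PowerSeries.coeff k (cfD (l ++ [a]))⁻¹ := by
  intro l
  induction l with
  | nil =>
    intro _ a ha k
    cases k with
    | zero => rw [cfF_zero, cfF_zero]
    | succ k =>
      have h2 : 0 ≤ PowerSeries.coeff (k+1) (cfD ([] ++ [a]))⁻¹ :=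
        cfF_nonneg _ (by simpa using ha) _
      calc PowerSeries.coeff (k+1) (cfD [])⁻¹ = 0 := by simp [cfD, PowerSeries.coeff_one]
      _ ≤ _ := h2
  | cons c l ih =>
    intro h a ha k
    have hc : 0 ≤ c := h c (by simp)
    have hl : ∀ x ∈ l, 0 ≤ x := fun x hx => h x (by simp [hx])
    have hl' : ∀ x ∈ l ++ [a], 0 ≤ x := by
      intro x hx
      rcases List.mem_append.1 hx with h1 | h1
      · exact hl x h1
      · simp at h1; subst h1; exact ha
    induction k using Nat.strong_induction_on with
    | _ k ihk =>
      match k with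
      | 0 => rw [cfF_zero, cfF_zero]
      | (k+1) =>
        rw [show (c :: l) ++ [a] = c :: (l ++ [a]) from rfl, cfF_succ, cfF_succ]
        refine mul_le_mul_of_nonneg_left (Finset.sum_le_sum fun p hp => ?_) hc
        exact mul_le_mul (ih hl a ha p) (ihk (k - p) (by omega))
          (cfF_nonneg (c :: l) h (k - p)) (cfF_nonneg (l ++ [a]) hl' p)

lemma cfF_super : ∀ (l : List ℝ), (∀ x ∈ l, 0 ≤ x) → ∀ i j,
    PowerSeries.coeff i (cfD l)⁻¹ * PowerSeries.coeff j (cfD l)⁻¹ ≤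
      PowerSeries.coeff (i + j) (cfD l)⁻¹ := by
  intro l hl i
  cases l with
  | nil =>
    intro j
    cases i <;> cases j <;> simp [cfD, PowerSeries.coeff_one]
  | cons a l =>
    have ha : 0 ≤ a := hl a (by simp)
    have hlt : ∀ x ∈ l, 0 ≤ x := fun x hx => hl x (by simp [hx])
    induction i using Nat.strong_induction_on with
    | _ i ihi =>
      match i with
      | 0 => intro j; rw [cfF_zero, one_mul, Nat.zero_add]
      | (i+1) =>
        intro j
        rw [cfF_succ, show i + 1 + j = (i + j) + 1 by omega, cfF_succ]
        rw [mul_assoc, Finset.sum_mul]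
        refine mul_le_mul_of_nonneg_left ?_ ha
        calc ∑ p ∈ Finset.range (i+1),
              PowerSeries.coeff p (cfD l)⁻¹ * PowerSeries.coeff (i - p) (cfD (a :: l))⁻¹ *
                PowerSeries.coeff j (cfD (a :: l))⁻¹
            ≤ ∑ p ∈ Finset.range (i+1),
              PowerSeries.coeff p (cfD l)⁻¹ * PowerSeries.coeff (i + j - p) (cfD (a :: l))⁻¹ := by
              refine Finset.sum_le_sum fun p hp => ?_
              have hpi : p ≤ i := by simpa [Nat.lt_succ_iff] using hp
              have : i - p + j = i + j - p := by omega
              rw [mul_assoc]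
              refine mul_le_mul_of_nonneg_left ?_ (cfF_nonneg l hlt p)
              calc PowerSeries.coeff (i - p) (cfD (a :: l))⁻¹ *
                    PowerSeries.coeff j (cfD (a :: l))⁻¹
                  ≤ PowerSeries.coeff (i - p + j) (cfD (a :: l))⁻¹ := ihi (i - p) (by omega) j
                _ = PowerSeries.coeff (i + j - p) (cfD (a :: l))⁻¹ := by rw [this]
          _ ≤ ∑ p ∈ Finset.range (i + j + 1),
              PowerSeries.coeff p (cfD l)⁻¹ * PowerSeries.coeff (i + j - p) (cfD (a :: l))⁻¹ := by
              refine Finset.sum_le_sum_of_subset_of_nonneg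
                (Finset.range_subset_range.2 (by omega)) fun p _ _ => ?_
              exact mul_nonneg (cfF_nonneg l hlt p) (cfF_nonneg (a :: l) hl (i + j - p))

/-- For a probability measure `μ` on `[0,C²]` with moments `m n`, whose moment
generating series has Stieltjes continued fraction coefficients `α`, the lower
bounds `b n` (exponential growth rate of the truncated continued fraction) form
a nondecreasing sequence with `b n ^ n ≥ m n / m 0`, converging to the
exponential growth rate of the moment sequence. -/
theorem cf_lower_bounds (μ : Measure ℝ) [IsProbabilityMeasure μ] (C : ℝ) (hC : 0 < C)
    (hsupp : μ (Set.Icc 0 (C ^ 2))ᶜ = 0)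
    (m : ℕ → ℝ) (hint : ∀ n : ℕ, Integrable (fun x => x ^ n) μ)
    (hm : ∀ n : ℕ, m n = ∫ x, x ^ n ∂μ)
    (α : ℕ → ℝ) (hα : ∀ j, 0 ≤ α j)
    (hcf : ∀ n k : ℕ, k ≤ n →
      PowerSeries.coeff k (cfA (List.ofFn fun i : Fin (n + 1) => α i)) = m k)
    (b : ℕ → ℝ)
    (hb : ∀ n, b n = Filter.limsup
      (fun k : ℕ =>
        |PowerSeries.coeff k (cfA (List.ofFn fun i : Fin (n + 1) => α i))| ^ (1 / (k : ℝ)))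
      Filter.atTop) :
    Monotone b ∧ (∀ n : ℕ, m n / m 0 ≤ (b n) ^ n) ∧
      Filter.Tendsto b Filter.atTop
        (nhds (Filter.limsup (fun n : ℕ => (m n) ^ (1 / (n : ℝ))) Filter.atTop)) := by
  classical
  have haein : ∀ᵐ x ∂μ, x ∈ Set.Icc 0 (C ^ 2) := mem_ae_iff.mpr hsupp
  have hm0 : m 0 = 1 := by rw [hm]; simp
  have hm_nonneg : ∀ k, 0 ≤ m k := by
    intro k; rw [hm]
    refine integral_nonneg_of_ae ?_
    filter_upwards [haein] with x hx
    exact pow_nonneg hx.1 k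
  have hCsq : (0:ℝ) ≤ C ^ 2 := sq_nonneg C
  have hm_le : ∀ k, m k ≤ (C ^ 2) ^ k := by
    intro k; rw [hm]
    calc ∫ x, x ^ k ∂μ ≤ ∫ _, (C ^ 2) ^ k ∂μ := by
          refine integral_mono_ae (hint k) (integrable_const _) ?_
          filter_upwards [haein] with x hx
          exact pow_le_pow_left₀ hx.1 hx.2 k
      _ = (C ^ 2) ^ k := by simp
  have hα0 : α 0 = 1 := by
    have h := hcf 0 0 le_rfl
    rw [hm0] at h
    simpa [cfA, List.ofFn_succ, PowerSeries.coeff_C_mul, cfF_zero] using h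
  set l : ℕ → List ℝ := fun n => List.ofFn (fun i : Fin n => α (i + 1)) with hldef
  have hofn : ∀ n, (List.ofFn fun i : Fin (n + 1) => α i) = α 0 :: l n := by
    intro n
    rw [List.ofFn_succ]
    simp [hldef, Fin.val_succ]
  have hlnn : ∀ n, ∀ x ∈ l n, 0 ≤ x := by
    intro n x hx
    rw [hldef] at hx
    obtain ⟨i, rfl⟩ := List.mem_ofFn.1 hx
    exact hα _
  have hlsucc : ∀ n, l (n + 1) = l n ++ [α (n + 1)] := by
    intro n
    rw [hldef]
    simp only [List.ofFn_succ']
    simp [List.concat_eq_append, Fin.last]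
  set c : ℕ → ℕ → ℝ := fun n k => PowerSeries.coeff k (cfD (l n))⁻¹ with hcdef
  have hcA : ∀ n k, PowerSeries.coeff k (cfA (List.ofFn fun i : Fin (n + 1) => α i)) = c n k := by
    intro n k
    rw [hofn n, show cfA (α 0 :: l n) = PowerSeries.C (α 0) * (cfD (l n))⁻¹ from rfl,
      PowerSeries.coeff_C_mul, hα0, one_mul]
  have hc0 : ∀ n, c n 0 = 1 := fun n => cfF_zero (l n)
  have hcnn : ∀ n k, 0 ≤ c n k := fun n k => cfF_nonneg (l n) (hlnn n) k
  have hsuper : ∀ n i j, c n i * c n j ≤ c n (i + j) := fun n => cfF_super (l n) (hlnn n)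
  have hcmono : ∀ k, Monotone fun n => c n k := by
    intro k
    refine monotone_nat_of_le_succ fun n => ?_
    have h := cfF_append (l n) (hlnn n) (α (n + 1)) (hα _) k
    show c n k ≤ c (n + 1) k
    rw [hcdef]
    simp only []
    rw [hlsucc n]
    exact h
  have hck : ∀ n k, k ≤ n → c n k = m k := fun n k h => by rw [← hcA n k, hcf n k h]
  have hcm : ∀ n k, c n k ≤ m k := by
    intro n k
    calc c n k ≤ c (max n k) k := hcmono k (le_max_left _ _)
      _ = m k := hck _ _ (le_max_right _ _)
  have hbeq : ∀ n, b n = limsup (fun k : ℕ => c n k ^ (1 / (k : ℝ))) atTop := by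
    intro n
    rw [hb n]
    congr 1
    funext k
    rw [hcA, abs_of_nonneg (hcnn n k)]
  have hub : ∀ n k, 1 ≤ k → c n k ^ (1 / (k : ℝ)) ≤ C ^ 2 := by
    intro n k hk
    have hkpos : (0:ℝ) < (k : ℝ) := by exact_mod_cast hk
    have h1 : c n k ≤ (C ^ 2) ^ k := (hcm n k).trans (hm_le k)
    calc c n k ^ (1 / (k : ℝ)) ≤ ((C ^ 2) ^ k : ℝ) ^ (1 / (k : ℝ)) :=
          Real.rpow_le_rpow (hcnn n k) h1 (by positivity)
      _ = C ^ 2 := by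
          rw [← Real.rpow_natCast (C ^ 2) k, ← Real.rpow_mul hCsq, mul_one_div,
            div_self (ne_of_gt hkpos), Real.rpow_one]
  have hbdd : ∀ n, IsBoundedUnder (· ≤ ·) atTop fun k : ℕ => c n k ^ (1 / (k : ℝ)) := by
    intro n
    refine isBoundedUnder_of_eventually_le (a := C ^ 2) ?_
    filter_upwards [eventually_ge_atTop 1] with k hk
    exact hub n k hk
  have hcob : ∀ u : ℕ → ℝ, (∀ k, 0 ≤ u k) → IsCoboundedUnder (· ≤ ·) atTop u := by
    intro u hu
    exact isCoboundedUnder_le_of_le atTop hu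
  have hpow : ∀ n j q, c n j ^ q ≤ c n (q * j) := by
    intro n j q
    induction q with
    | zero => simp [hc0]
    | succ q ih =>
      calc c n j ^ (q + 1) = c n j ^ q * c n j := pow_succ _ _
        _ ≤ c n (q * j) * c n j := mul_le_mul_of_nonneg_right ih (hcnn n j)
        _ ≤ c n (q * j + j) := hsuper n (q * j) j
        _ = c n ((q + 1) * j) := by rw [Nat.succ_mul]
  have hlow : ∀ n j, 1 ≤ j → c n j ^ (1 / (j : ℝ)) ≤ b n := by
    intro n j hj
    rw [hbeq n]
    refine le_limsup_of_frequently_le ?_ (hbdd n)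
    rw [frequently_atTop]
    intro N
    refine ⟨(N + 1) * j, ?_, ?_⟩
    · calc N ≤ N + 1 := by omega
        _ ≤ (N + 1) * j := Nat.le_mul_of_pos_right _ (by omega)
    · set q := N + 1 with hq
      have h1 : c n j ^ q ≤ c n (q * j) := hpow n j q
      have h2 : (c n j ^ q : ℝ) ^ (1 / ((q * j : ℕ) : ℝ)) ≤ c n (q * j) ^ (1 / ((q * j : ℕ) : ℝ)) :=
        Real.rpow_le_rpow (pow_nonneg (hcnn n j) q) h1 (by positivity)
      refine le_trans (le_of_eq ?_) h2
      rw [← Real.rpow_natCast (c n j) q, ← Real.rpow_mul (hcnn n j)]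
      congr 1
      have hjr : ((j : ℝ)) ≠ 0 := by positivity
      have hqr : ((q : ℝ)) ≠ 0 := by positivity
      push_cast
      field_simp
  set L := limsup (fun k : ℕ => m k ^ (1 / (k : ℝ))) atTop with hLdef
  have hmub : IsBoundedUnder (· ≤ ·) atTop fun k : ℕ => m k ^ (1 / (k : ℝ)) := by
    refine isBoundedUnder_of_eventually_le (a := C ^ 2) ?_
    filter_upwards [eventually_ge_atTop 1] with k hk
    have hkpos : (0:ℝ) < (k : ℝ) := by exact_mod_cast hk
    calc m k ^ (1 / (k : ℝ)) ≤ ((C ^ 2) ^ k : ℝ) ^ (1 / (k : ℝ)) :=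
          Real.rpow_le_rpow (hm_nonneg k) (hm_le k) (by positivity)
      _ = C ^ 2 := by
          rw [← Real.rpow_natCast (C ^ 2) k, ← Real.rpow_mul hCsq, mul_one_div,
            div_self (ne_of_gt hkpos), Real.rpow_one]
  have hbL : ∀ n, b n ≤ L := by
    intro n
    rw [hbeq n, hLdef]
    refine limsup_le_limsup (Eventually.of_forall fun k => ?_)
      (hcob _ fun k => Real.rpow_nonneg (hcnn n k) _) hmub
    exact Real.rpow_le_rpow (hcnn n k) (hcm n k) (by positivity)
  have hbmono : Monotone b := by
    intro n n' h
    rw [hbeq n, hbeq n']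
    refine limsup_le_limsup (Eventually.of_forall fun k =>
        Real.rpow_le_rpow (hcnn n k) (hcmono k h) (by positivity))
      (hcob _ fun k => Real.rpow_nonneg (hcnn n k) _) (hbdd n')
  refine ⟨hbmono, ?_, ?_⟩
  · intro n
    rw [hm0, div_one]
    cases n with
    | zero => simp [hm0]
    | succ n =>
      have h1 : m (n + 1) ^ (1 / ((n + 1 : ℕ) : ℝ)) ≤ b (n + 1) := by
        have h := hlow (n + 1) (n + 1) (by omega)
        rwa [hck (n + 1) (n + 1) le_rfl] at h
      calc m (n + 1)
          = (m (n + 1) ^ (1 / ((n + 1 : ℕ) : ℝ))) ^ (n + 1 : ℕ) := by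
            rw [← Real.rpow_natCast (m (n + 1) ^ (1 / ((n + 1 : ℕ) : ℝ))) (n + 1),
              ← Real.rpow_mul (hm_nonneg _), one_div,
              inv_mul_cancel₀ (by exact_mod_cast Nat.succ_ne_zero n), Real.rpow_one]
        _ ≤ b (n + 1) ^ (n + 1 : ℕ) :=
            pow_le_pow_left₀ (Real.rpow_nonneg (hm_nonneg _) _) h1 (n + 1)
  · have hbdda : BddAbove (Set.range b) := ⟨L, by rintro _ ⟨n, rfl⟩; exact hbL n⟩
    have htends : Tendsto b atTop (nhds (⨆ n, b n)) := tendsto_atTop_ciSup hbmono hbdda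
    have hTL : (⨆ n, b n) = L := by
      refine le_antisymm (ciSup_le hbL) ?_
      rw [hLdef]
      refine limsup_le_of_le (hcob _ fun k => Real.rpow_nonneg (hm_nonneg k) _) ?_
      filter_upwards [eventually_ge_atTop 1] with k hk
      calc m k ^ (1 / (k : ℝ)) ≤ b k := by
            have h := hlow k k hk
            rwa [hck k k le_rfl] at h
        _ ≤ ⨆ n, b n := le_ciSup hbdda k
    exact hTL ▸ htends
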